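/- Let V be a unitary matrix on ℂ^d ⊗ ℂ^k, let ρ be a faithful density matrix on ℂ^d and σ a faithful density matrix on ℂ^k. Define ρ' = tr_a(V (ρ ⊗ σ) V*) and 𝓕σ = tr_s(V (ρ ⊗ σ) V*), and assume ρ' and 𝓕σ are faithful. Then S(ρ') − S(ρ) + tr((σ − 𝓕σ) · log σ) ≥ 0. -/

import Mathlib

open Matrix Kronecker BigOperators
open scoped ComplexOrder

/-- Matrix logarithm via the spectral functional calculus (junk value `0` off Hermitian matrices). -/
noncomputable def matLog {n : Type*} [Fintype n] [DecidableEq n]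
    (A : Matrix n n ℂ) : Matrix n n ℂ :=
  if h : A.IsHermitian then
    (h.eigenvectorUnitary : Matrix n n ℂ) *
      Matrix.diagonal (fun i => (Real.log (h.eigenvalues i) : ℂ)) *
      (star h.eigenvectorUnitary : Matrix n n ℂ)
  else 0

/-- von Neumann entropy  S(ρ) = −tr(ρ log ρ). -/
noncomputable def vnEntropy {n : Type*} [Fintype n] [DecidableEq n] (A : Matrix n n ℂ) : ℝ :=
  (-(A * matLog A).trace).re

/-- Quantum relative entropy  D(ρ‖σ) = tr(ρ log ρ) − tr(ρ log σ). -/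
noncomputable def relEnt {n : Type*} [Fintype n] [DecidableEq n] (ρ σ : Matrix n n ℂ) : ℝ :=
  ((ρ * matLog ρ).trace - (ρ * matLog σ).trace).re

/-- A density matrix: positive semidefinite with unit trace. -/
def IsDensityMatrix {n : Type*} [Fintype n] (ρ : Matrix n n ℂ) : Prop :=
  ρ.PosSemidef ∧ ρ.trace = 1

/-- A faithful density matrix: positive definite with unit trace. -/
def IsFaithfulDensityMatrix {n : Type*} [Fintype n] (ρ : Matrix n n ℂ) : Prop :=
  ρ.PosDef ∧ ρ.trace = 1

/-- Partial trace over the ancilla (second factor). -/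
noncomputable def trA {d k : ℕ} (X : Matrix (Fin d × Fin k) (Fin d × Fin k) ℂ) :
    Matrix (Fin d) (Fin d) ℂ :=
  Matrix.of fun i i' => ∑ j : Fin k, X (i, j) (i', j)

/-- Partial trace over the system (first factor). -/
noncomputable def trS {d k : ℕ} (X : Matrix (Fin d × Fin k) (Fin d × Fin k) ℂ) :
    Matrix (Fin k) (Fin k) ℂ :=
  Matrix.of fun j j' => ∑ i : Fin d, X (i, j) (i, j')

/-- Unconditional one-step map  𝓥_s(ρ) = tr_a(V (ρ ⊗ σ) V*). -/
noncomputable def Vs {d k : ℕ} (V : Matrix (Fin d × Fin k) (Fin d × Fin k) ℂ)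
    (σ : Matrix (Fin k) (Fin k) ℂ) (ρ : Matrix (Fin d) (Fin d) ℂ) :
    Matrix (Fin d) (Fin d) ℂ :=
  trA (V * (ρ ⊗ₖ σ) * Vᴴ)

/-- Measurement map  𝓜_y(ρ) = tr_a((1 ⊗ M_y) V (ρ ⊗ σ) V* (1 ⊗ M_y)*). -/
noncomputable def Meas {d k : ℕ} (V : Matrix (Fin d × Fin k) (Fin d × Fin k) ℂ)
    (σ : Matrix (Fin k) (Fin k) ℂ) (M : Matrix (Fin k) (Fin k) ℂ)
    (ρ : Matrix (Fin d) (Fin d) ℂ) : Matrix (Fin d) (Fin d) ℂ :=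
  trA ((((1 : Matrix (Fin d) (Fin d) ℂ)) ⊗ₖ M) * (V * (ρ ⊗ₖ σ) * Vᴴ) *
      (((1 : Matrix (Fin d) (Fin d) ℂ)) ⊗ₖ M)ᴴ)

/-- The unnormalized conditioned state  𝓜_{y_m} ∘ ⋯ ∘ 𝓜_{y_1}(ρ₀). -/
noncomputable def measChain {d k : ℕ} {Y : Type} (V : Matrix (Fin d × Fin k) (Fin d × Fin k) ℂ)
    (σ : Matrix (Fin k) (Fin k) ℂ) (M : Y → Matrix (Fin k) (Fin k) ℂ)
    (ρ₀ : Matrix (Fin d) (Fin d) ℂ) : (m : ℕ) → (Fin m → Y) → Matrix (Fin d) (Fin d) ℂ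
  | 0, _ => ρ₀
  | (m + 1), y => Meas V σ (M (y (Fin.last m))) (measChain V σ M ρ₀ m (fun i => y i.castSucc))

/-- The probability  p_m(y)  of the record y. -/
noncomputable def recProb {d k : ℕ} {Y : Type} (V : Matrix (Fin d × Fin k) (Fin d × Fin k) ℂ)
    (σ : Matrix (Fin k) (Fin k) ℂ) (M : Y → Matrix (Fin k) (Fin k) ℂ)
    (ρ₀ : Matrix (Fin d) (Fin d) ℂ) (m : ℕ) (y : Fin m → Y) : ℝ :=
  (measChain V σ M ρ₀ m y).trace.re

/-- The conditional state  ρ̂_{n|m}(y) = 𝓥_s^{n−m}(𝓜_{y_m} ∘ ⋯ ∘ 𝓜_{y_1}(ρ₀)) / p_m(y). -/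
noncomputable def condState {d k : ℕ} {Y : Type} (V : Matrix (Fin d × Fin k) (Fin d × Fin k) ℂ)
    (σ : Matrix (Fin k) (Fin k) ℂ) (M : Y → Matrix (Fin k) (Fin k) ℂ)
    (ρ₀ : Matrix (Fin d) (Fin d) ℂ) (n m : ℕ) (y : Fin m → Y) :
    Matrix (Fin d) (Fin d) ℂ :=
  ((recProb V σ M ρ₀ m y : ℂ))⁻¹ • (Vs V σ)^[n - m] (measChain V σ M ρ₀ m y)

/-- The unconditional state  ρ_n = 𝓥_s^n(ρ₀). -/
noncomputable def uncondState {d k : ℕ} (V : Matrix (Fin d × Fin k) (Fin d × Fin k) ℂ)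
    (σ : Matrix (Fin k) (Fin k) ℂ) (ρ₀ : Matrix (Fin d) (Fin d) ℂ) (n : ℕ) :
    Matrix (Fin d) (Fin d) ℂ :=
  (Vs V σ)^[n] ρ₀

/-- The average conditional entropy  S̄_{n|m}. -/
noncomputable def avgCondEntropy {d k : ℕ} {Y : Type} [Fintype Y]
    (V : Matrix (Fin d × Fin k) (Fin d × Fin k) ℂ)
    (σ : Matrix (Fin k) (Fin k) ℂ) (M : Y → Matrix (Fin k) (Fin k) ℂ)
    (ρ₀ : Matrix (Fin d) (Fin d) ℂ) (n m : ℕ) : ℝ :=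
  ∑ y : Fin m → Y, recProb V σ M ρ₀ m y * vnEntropy (condState V σ M ρ₀ n m y)

/-- The Holevo information  H_{n|m} = S(ρ_n) − S̄_{n|m}. -/
noncomputable def holevoInfo {d k : ℕ} {Y : Type} [Fintype Y]
    (V : Matrix (Fin d × Fin k) (Fin d × Fin k) ℂ)
    (σ : Matrix (Fin k) (Fin k) ℂ) (M : Y → Matrix (Fin k) (Fin k) ℂ)
    (ρ₀ : Matrix (Fin d) (Fin d) ℂ) (n m : ℕ) : ℝ :=
  vnEntropy (uncondState V σ ρ₀ n) - avgCondEntropy V σ M ρ₀ n m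

lemma spectral_welldef {n : Type*} [Fintype n] [DecidableEq n]
    (f : ℝ → ℝ) {A U : Matrix n n ℂ} (hU : U ∈ Matrix.unitaryGroup n ℂ) (c : n → ℝ)
    (hA : A.IsHermitian)
    (hAeq : A = U * Matrix.diagonal (fun i => (c i : ℂ)) * Uᴴ) :
    (hA.eigenvectorUnitary : Matrix n n ℂ) *
      Matrix.diagonal (fun i => (f (hA.eigenvalues i) : ℂ)) *
      (star hA.eigenvectorUnitary : Matrix n n ℂ)
    = U * Matrix.diagonal (fun i => (f (c i) : ℂ)) * Uᴴ := by
  set U₀ : Matrix n n ℂ := (hA.eigenvectorUnitary : Matrix n n ℂ) with hU₀def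
  have hU₀ : U₀ ∈ Matrix.unitaryGroup n ℂ := hA.eigenvectorUnitary.2
  have h1 : U₀ * U₀ᴴ = 1 := by
    simpa [Matrix.star_eq_conjTranspose] using (Matrix.mem_unitaryGroup_iff.mp hU₀)
  have h1' : U₀ᴴ * U₀ = 1 := by
    simpa [Matrix.star_eq_conjTranspose] using (Matrix.mem_unitaryGroup_iff'.mp hU₀)
  have h2 : U * Uᴴ = 1 := by
    simpa [Matrix.star_eq_conjTranspose] using (Matrix.mem_unitaryGroup_iff.mp hU)
  have h2' : Uᴴ * U = 1 := by
    simpa [Matrix.star_eq_conjTranspose] using (Matrix.mem_unitaryGroup_iff'.mp hU)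
  have hst : A = U₀ * Matrix.diagonal (fun i => (hA.eigenvalues i : ℂ)) * U₀ᴴ := by
    simpa [Function.comp_def, Matrix.star_eq_conjTranspose] using hA.spectral_theorem
  set W : Matrix n n ℂ := Uᴴ * U₀ with hW
  have key : Matrix.diagonal (fun i => (c i : ℂ)) * W
      = W * Matrix.diagonal (fun i => (hA.eigenvalues i : ℂ)) := by
    have h := hAeq.symm.trans hst
    calc Matrix.diagonal (fun i => (c i : ℂ)) * W
        = Uᴴ * (U * Matrix.diagonal (fun i => (c i : ℂ)) * Uᴴ) * U₀ := by
          rw [hW]; rw [show U * Matrix.diagonal (fun i => (c i : ℂ)) * Uᴴ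
            = U * (Matrix.diagonal (fun i => (c i : ℂ)) * Uᴴ) from by rw [mul_assoc],
            ← mul_assoc, ← mul_assoc, h2', one_mul, mul_assoc]
      _ = Uᴴ * (U₀ * Matrix.diagonal (fun i => (hA.eigenvalues i : ℂ)) * U₀ᴴ) * U₀ := by rw [h]
      _ = W * Matrix.diagonal (fun i => (hA.eigenvalues i : ℂ)) := by
          rw [mul_assoc, mul_assoc, mul_assoc, h1', mul_one, hW, ← mul_assoc, mul_assoc]
  have keyf : Matrix.diagonal (fun i => (f (c i) : ℂ)) * W
      = W * Matrix.diagonal (fun i => (f (hA.eigenvalues i) : ℂ)) := by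
    ext i j
    have hij := congrFun (congrFun key i) j
    simp only [Matrix.diagonal_mul, Matrix.mul_diagonal] at hij ⊢
    rcases eq_or_ne (W i j) 0 with h0 | h0
    · simp [h0]
    · have hc : c i = hA.eigenvalues j := by
        have : ((c i : ℂ) - (hA.eigenvalues j : ℂ)) * W i j = 0 := by
          rw [sub_mul, hij, mul_comm]; ring
        have := (mul_eq_zero.mp this).resolve_right h0
        exact_mod_cast sub_eq_zero.mp this
      rw [hc, mul_comm]
  have e1 : U * W = U₀ := by rw [hW, ← mul_assoc, h2, one_mul]
  have e2 : W * U₀ᴴ = Uᴴ := by rw [hW, mul_assoc, h1, mul_one]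
  calc U₀ * Matrix.diagonal (fun i => (f (hA.eigenvalues i) : ℂ)) * U₀ᴴ
      = U * (W * Matrix.diagonal (fun i => (f (hA.eigenvalues i) : ℂ))) * U₀ᴴ := by
        rw [← mul_assoc, e1]
    _ = U * (Matrix.diagonal (fun i => (f (c i) : ℂ)) * W) * U₀ᴴ := by rw [keyf]
    _ = U * Matrix.diagonal (fun i => (f (c i) : ℂ)) * Uᴴ := by
        rw [← mul_assoc, mul_assoc _ W, e2]


section Aux
variable {n : Type*} [Fintype n] [DecidableEq n]

lemma isHermitian_cdg {U : Matrix n n ℂ} (c : n → ℝ) :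
    (U * Matrix.diagonal (fun i => (c i : ℂ)) * Uᴴ).IsHermitian := by
  unfold Matrix.IsHermitian
  rw [Matrix.conjTranspose_mul, Matrix.conjTranspose_mul, Matrix.conjTranspose_conjTranspose,
    Matrix.diagonal_conjTranspose, mul_assoc]
  congr 1
  ext i j
  simp [Matrix.diagonal_apply]

lemma matLog_cdg {U : Matrix n n ℂ} (hU : U ∈ Matrix.unitaryGroup n ℂ) (c : n → ℝ) :
    matLog (U * Matrix.diagonal (fun i => (c i : ℂ)) * Uᴴ)
      = U * Matrix.diagonal (fun i => (Real.log (c i) : ℂ)) * Uᴴ := by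
  have hA := isHermitian_cdg (U := U) c
  rw [matLog, dif_pos hA]
  exact spectral_welldef Real.log hU c hA rfl

lemma trace_cdg {U : Matrix n n ℂ} (hU : U ∈ Matrix.unitaryGroup n ℂ) (c : n → ℝ) :
    (U * Matrix.diagonal (fun i => (c i : ℂ)) * Uᴴ).trace = ((∑ i, c i : ℝ) : ℂ) := by
  have h2' : Uᴴ * U = 1 := by
    simpa [Matrix.star_eq_conjTranspose] using (Matrix.mem_unitaryGroup_iff'.mp hU)
  rw [Matrix.trace_mul_comm, ← mul_assoc, h2', one_mul, Matrix.trace_diagonal]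
  push_cast
  rfl

lemma trace_cdg_mul_cdg {U W : Matrix n n ℂ} (hU : U ∈ Matrix.unitaryGroup n ℂ)
    (hW : W ∈ Matrix.unitaryGroup n ℂ) (p l : n → ℝ) :
    ((U * Matrix.diagonal (fun i => (p i : ℂ)) * Uᴴ) *
      (W * Matrix.diagonal (fun i => (l i : ℂ)) * Wᴴ)).trace
      = ((∑ i, ∑ j, p i * l j * Complex.normSq ((Uᴴ * W) i j) : ℝ) : ℂ) := by
  have h2' : Uᴴ * U = 1 := by
    simpa [Matrix.star_eq_conjTranspose] using (Matrix.mem_unitaryGroup_iff'.mp hU)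
  set M : Matrix n n ℂ := Uᴴ * W with hM
  have h2 : U * Uᴴ = 1 := by
    simpa [Matrix.star_eq_conjTranspose] using (Matrix.mem_unitaryGroup_iff.mp hU)
  have hMH : Wᴴ * U = Mᴴ := by
    rw [hM, Matrix.conjTranspose_mul, Matrix.conjTranspose_conjTranspose]
  have hprod : ((U * Matrix.diagonal (fun i => (p i : ℂ)) * Uᴴ) *
      (W * Matrix.diagonal (fun i => (l i : ℂ)) * Wᴴ)).trace
      = (Matrix.diagonal (fun i => (p i : ℂ)) *
          (M * (Matrix.diagonal (fun i => (l i : ℂ)) * Mᴴ))).trace := by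
    rw [show (U * Matrix.diagonal (fun i => (p i : ℂ)) * Uᴴ) *
      (W * Matrix.diagonal (fun i => (l i : ℂ)) * Wᴴ)
      = U * (Matrix.diagonal (fun i => (p i : ℂ)) * (Uᴴ * (W * (Matrix.diagonal (fun i => (l i : ℂ)) * Wᴴ)))) from by
        simp only [mul_assoc], Matrix.trace_mul_comm]
    congr 1
    rw [hM]
    simp only [mul_assoc]
    rw [← hMH]
  rw [hprod]
  rw [Matrix.trace]
  push_cast
  refine Finset.sum_congr rfl fun i _ => ?_
  rw [Matrix.diag_apply, Matrix.diagonal_mul, Matrix.mul_apply]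
  simp only [Matrix.diagonal_mul, Matrix.conjTranspose_apply]
  rw [Finset.mul_sum]
  refine Finset.sum_congr rfl fun x _ => ?_
  rw [Complex.star_def, show (p i : ℂ) * (M i x * ((l x : ℂ) * (starRingEnd ℂ) (M i x)))
    = ((p i : ℂ) * (l x : ℂ)) * (M i x * (starRingEnd ℂ) (M i x)) from by ring,
    Complex.mul_conj]

lemma unitary_row_sum {M : Matrix n n ℂ} (hM : M ∈ Matrix.unitaryGroup n ℂ) (i : n) :
    ∑ j, Complex.normSq (M i j) = 1 := by
  have h : M * Mᴴ = 1 := by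
    simpa [Matrix.star_eq_conjTranspose] using (Matrix.mem_unitaryGroup_iff.mp hM)
  have h1 := congrFun (congrFun h i) i
  rw [Matrix.mul_apply] at h1
  simp only [Matrix.conjTranspose_apply, Matrix.one_apply_eq] at h1
  have : ((∑ j, Complex.normSq (M i j) : ℝ) : ℂ) = 1 := by
    push_cast
    rw [← h1]
    refine Finset.sum_congr rfl fun j _ => ?_
    rw [Complex.star_def, Complex.mul_conj]
  exact_mod_cast this

lemma unitary_col_sum {M : Matrix n n ℂ} (hM : M ∈ Matrix.unitaryGroup n ℂ) (j : n) :
    ∑ i, Complex.normSq (M i j) = 1 := by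
  have h : Mᴴ * M = 1 := by
    simpa [Matrix.star_eq_conjTranspose] using (Matrix.mem_unitaryGroup_iff'.mp hM)
  have h1 := congrFun (congrFun h j) j
  rw [Matrix.mul_apply] at h1
  simp only [Matrix.conjTranspose_apply, Matrix.one_apply_eq] at h1
  have : ((∑ i, Complex.normSq (M i j) : ℝ) : ℂ) = 1 := by
    push_cast
    rw [← h1]
    refine Finset.sum_congr rfl fun i _ => ?_
    rw [Complex.star_def, mul_comm, Complex.mul_conj]
  exact_mod_cast this

lemma klein_pointwise {p q : ℝ} (hp : 0 < p) (hq : 0 < q) :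
    p - q ≤ p * Real.log p - p * Real.log q := by
  have h := Real.log_le_sub_one_of_pos (div_pos hq hp)
  rw [Real.log_div (ne_of_gt hq) (ne_of_gt hp)] at h
  have h2 := mul_le_mul_of_nonneg_left h (le_of_lt hp)
  have h3 : p * (q / p - 1) = q - p := by
    field_simp
  nlinarith [h2, h3]

lemma klein_core (c : n → n → ℝ) (p q : n → ℝ) (hc : ∀ i j, 0 ≤ c i j)
    (hrow : ∀ i, ∑ j, c i j = 1) (hcol : ∀ j, ∑ i, c i j = 1)
    (hp : ∀ i, 0 < p i) (hq : ∀ i, 0 < q i) (hpq : ∑ i, p i = ∑ i, q i) :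
    0 ≤ (∑ i, p i * Real.log (p i)) - ∑ i, ∑ j, p i * Real.log (q j) * c i j := by
  have h1 : ∑ i, p i * Real.log (p i) = ∑ i, ∑ j, p i * Real.log (p i) * c i j := by
    refine Finset.sum_congr rfl fun i _ => ?_
    rw [← Finset.mul_sum, hrow, mul_one]
  rw [h1, ← Finset.sum_sub_distrib]
  simp only [← Finset.sum_sub_distrib]
  have key : ∀ i j, (p i - q j) * c i j
      ≤ p i * Real.log (p i) * c i j - p i * Real.log (q j) * c i j := by
    intro i j
    rw [← sub_mul]
    exact mul_le_mul_of_nonneg_right (klein_pointwise (hp i) (hq j)) (hc i j)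
  have hz : ∑ i, ∑ j, (p i - q j) * c i j = 0 := by
    have : ∀ i, ∑ j, (p i - q j) * c i j = p i - ∑ j, q j * c i j := by
      intro i
      simp only [sub_mul, Finset.sum_sub_distrib, ← Finset.mul_sum, hrow, mul_one]
    simp only [this, Finset.sum_sub_distrib, hpq]
    rw [Finset.sum_comm]
    simp only [← Finset.mul_sum, hcol, mul_one]
    exact sub_self _
  calc (0 : ℝ) = ∑ i, ∑ j, (p i - q j) * c i j := hz.symm
    _ ≤ ∑ i, ∑ j, (p i * Real.log (p i) * c i j - p i * Real.log (q j) * c i j) := by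
        refine Finset.sum_le_sum fun i _ => Finset.sum_le_sum fun j _ => key i j

lemma klein {U W : Matrix n n ℂ} (hU : U ∈ Matrix.unitaryGroup n ℂ)
    (hW : W ∈ Matrix.unitaryGroup n ℂ) (p q : n → ℝ)
    (hp : ∀ i, 0 < p i) (hq : ∀ i, 0 < q i) (hpq : ∑ i, p i = ∑ i, q i) :
    0 ≤ (((U * Matrix.diagonal (fun i => (p i : ℂ)) * Uᴴ) *
            matLog (U * Matrix.diagonal (fun i => (p i : ℂ)) * Uᴴ)).trace -
         ((U * Matrix.diagonal (fun i => (p i : ℂ)) * Uᴴ) *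
            matLog (W * Matrix.diagonal (fun i => (q i : ℂ)) * Wᴴ)).trace).re := by
  rw [matLog_cdg hU, matLog_cdg hW, trace_cdg_mul_cdg hU hU, trace_cdg_mul_cdg hU hW]
  have h2' : Uᴴ * U = 1 := by
    simpa [Matrix.star_eq_conjTranspose] using (Matrix.mem_unitaryGroup_iff'.mp hU)
  rw [h2']
  have hUW : Uᴴ * W ∈ Matrix.unitaryGroup n ℂ := by
    exact mul_mem (Matrix.star_eq_conjTranspose U ▸ Unitary.star_mem hU) hW
  have hfirst : ∑ i, ∑ j, p i * Real.log (p j) * Complex.normSq ((1 : Matrix n n ℂ) i j)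
      = ∑ i, p i * Real.log (p i) := by
    refine Finset.sum_congr rfl fun i _ => ?_
    rw [Finset.sum_eq_single i]
    · simp
    · intro j _ hj
      simp [Matrix.one_apply_ne (Ne.symm hj)]
    · simp
  rw [Complex.sub_re, Complex.ofReal_re, Complex.ofReal_re, hfirst]
  exact klein_core (fun i j => Complex.normSq ((Uᴴ * W) i j)) p q
    (fun i j => Complex.normSq_nonneg _)
    (fun i => unitary_row_sum hUW i) (fun j => unitary_col_sum hUW j) hp hq hpq

lemma trace_self_log {U : Matrix n n ℂ} (hU : U ∈ Matrix.unitaryGroup n ℂ) (c : n → ℝ) :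
    ((U * Matrix.diagonal (fun i => (c i : ℂ)) * Uᴴ) *
        matLog (U * Matrix.diagonal (fun i => (c i : ℂ)) * Uᴴ)).trace
      = ((∑ i, c i * Real.log (c i) : ℝ) : ℂ) := by
  rw [matLog_cdg hU, trace_cdg_mul_cdg hU hU]
  have h2' : Uᴴ * U = 1 := by
    simpa [Matrix.star_eq_conjTranspose] using (Matrix.mem_unitaryGroup_iff'.mp hU)
  rw [h2']
  congr 1
  refine Finset.sum_congr rfl fun i _ => ?_
  rw [Finset.sum_eq_single i]
  · simp
  · intro j _ hj
    simp [Matrix.one_apply_ne (Ne.symm hj)]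
  · simp

lemma posdef_decomp {A : Matrix n n ℂ} (hA : A.PosDef) :
    ∃ U ∈ Matrix.unitaryGroup n ℂ, ∃ p : n → ℝ, (∀ i, 0 < p i) ∧
      A = U * Matrix.diagonal (fun i => (p i : ℂ)) * Uᴴ := by
  refine ⟨hA.1.eigenvectorUnitary, hA.1.eigenvectorUnitary.2, hA.1.eigenvalues,
    hA.eigenvalues_pos, ?_⟩
  simpa [Function.comp_def, Matrix.star_eq_conjTranspose] using hA.1.spectral_theorem

end Aux

section Kron
variable {m l : Type*} [Fintype m] [DecidableEq m] [Fintype l] [DecidableEq l]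

lemma conjTranspose_kron (A : Matrix m m ℂ) (B : Matrix l l ℂ) :
    (A ⊗ₖ B)ᴴ = Aᴴ ⊗ₖ Bᴴ := by
  ext ⟨i, j⟩ ⟨i', j'⟩
  simp [Matrix.conjTranspose_apply, star_mul']

lemma kron_mem_unitaryGroup {U : Matrix m m ℂ} {W : Matrix l l ℂ}
    (hU : U ∈ Matrix.unitaryGroup m ℂ) (hW : W ∈ Matrix.unitaryGroup l ℂ) :
    U ⊗ₖ W ∈ Matrix.unitaryGroup (m × l) ℂ := by
  rw [Matrix.mem_unitaryGroup_iff, Matrix.star_eq_conjTranspose, conjTranspose_kron,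
    ← Matrix.mul_kronecker_mul]
  have h2 : U * Uᴴ = 1 := by
    simpa [Matrix.star_eq_conjTranspose] using (Matrix.mem_unitaryGroup_iff.mp hU)
  have h3 : W * Wᴴ = 1 := by
    simpa [Matrix.star_eq_conjTranspose] using (Matrix.mem_unitaryGroup_iff.mp hW)
  rw [h2, h3, Matrix.one_kronecker_one]

lemma cdg_kron (U : Matrix m m ℂ) (W : Matrix l l ℂ) (a : m → ℝ) (b : l → ℝ) :
    (U * Matrix.diagonal (fun i => (a i : ℂ)) * Uᴴ) ⊗ₖ
      (W * Matrix.diagonal (fun j => (b j : ℂ)) * Wᴴ)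
    = (U ⊗ₖ W) * Matrix.diagonal (fun ij : m × l => ((a ij.1 * b ij.2 : ℝ) : ℂ)) *
        (U ⊗ₖ W)ᴴ := by
  have hd : Matrix.diagonal (fun ij : m × l => ((a ij.1 * b ij.2 : ℝ) : ℂ))
      = (Matrix.diagonal fun i => (a i : ℂ)) ⊗ₖ (Matrix.diagonal fun j => (b j : ℂ)) := by
    rw [Matrix.diagonal_kronecker_diagonal]
    congr 1
    ext ij
    push_cast
    rfl
  rw [hd, conjTranspose_kron, ← Matrix.mul_kronecker_mul, ← Matrix.mul_kronecker_mul]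

end Kron

section PT
variable {d k : ℕ}

lemma trace_trA (X : Matrix (Fin d × Fin k) (Fin d × Fin k) ℂ) :
    (trA X).trace = X.trace := by
  simp [trA, Matrix.trace, Matrix.diag, Fintype.sum_prod_type]

lemma trace_mul_kron_one (X : Matrix (Fin d × Fin k) (Fin d × Fin k) ℂ)
    (A : Matrix (Fin d) (Fin d) ℂ) :
    (X * (A ⊗ₖ (1 : Matrix (Fin k) (Fin k) ℂ))).trace = ((trA X) * A).trace := by
  simp only [Matrix.trace, Matrix.diag_apply, Matrix.mul_apply, trA, Matrix.of_apply,
    Matrix.kroneckerMap_apply, Matrix.one_apply, Fintype.sum_prod_type, Finset.sum_mul,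
    mul_ite, mul_one, mul_zero, Finset.sum_ite_eq, Finset.sum_ite_eq', Finset.mem_univ, if_true]
  refine Finset.sum_congr rfl fun i _ => ?_
  rw [Finset.sum_comm]

lemma trace_mul_one_kron (X : Matrix (Fin d × Fin k) (Fin d × Fin k) ℂ)
    (B : Matrix (Fin k) (Fin k) ℂ) :
    (X * ((1 : Matrix (Fin d) (Fin d) ℂ) ⊗ₖ B)).trace = ((trS X) * B).trace := by
  simp only [Matrix.trace, Matrix.diag_apply, Matrix.mul_apply, trS, Matrix.of_apply,
    Matrix.kroneckerMap_apply, Matrix.one_apply, Fintype.sum_prod_type, Finset.sum_mul,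
    ite_mul, one_mul, zero_mul, mul_ite, mul_zero, Finset.sum_ite_irrel, Finset.sum_const_zero,
    Finset.sum_ite_eq, Finset.sum_ite_eq', Finset.mem_univ, if_true]
  rw [Finset.sum_comm]
  refine Finset.sum_congr rfl fun j _ => ?_
  rw [Finset.sum_comm]

end PT

set_option maxHeartbeats 1000000 in
/-- the second entropy-change inequality. -/
theorem entropy_increment_inequality_second {d k : ℕ}
    (V : Matrix (Fin d × Fin k) (Fin d × Fin k) ℂ)
    (hV : V ∈ Matrix.unitaryGroup (Fin d × Fin k) ℂ)
    (ρ : Matrix (Fin d) (Fin d) ℂ) (hρ : IsFaithfulDensityMatrix ρ)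
    (σ : Matrix (Fin k) (Fin k) ℂ) (hσ : IsFaithfulDensityMatrix σ)
    (hρ' : (trA (V * (ρ ⊗ₖ σ) * Vᴴ)).PosDef)
    (hF : (trS (V * (ρ ⊗ₖ σ) * Vᴴ)).PosDef) :
    0 ≤ vnEntropy (trA (V * (ρ ⊗ₖ σ) * Vᴴ)) - vnEntropy ρ +
          (((σ - trS (V * (ρ ⊗ₖ σ) * Vᴴ)) * matLog σ).trace).re := by
  obtain ⟨U₁, hU₁, p, hppos, hρeq⟩ := posdef_decomp hρ.1
  obtain ⟨W₁, hW₁, q, hqpos, hσeq⟩ := posdef_decomp hσ.1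
  obtain ⟨U₂, hU₂, p', hp'pos, hρ'eq⟩ := posdef_decomp hρ'
  set ω : Matrix (Fin d × Fin k) (Fin d × Fin k) ℂ := V * (ρ ⊗ₖ σ) * Vᴴ with hω
  -- the unitaries diagonalizing ω and ρ'⊗σ
  set X : Matrix (Fin d × Fin k) (Fin d × Fin k) ℂ := V * (U₁ ⊗ₖ W₁) with hXdef
  have hX : X ∈ Matrix.unitaryGroup (Fin d × Fin k) ℂ :=
    mul_mem hV (kron_mem_unitaryGroup hU₁ hW₁)
  have hX₂ : U₂ ⊗ₖ W₁ ∈ Matrix.unitaryGroup (Fin d × Fin k) ℂ :=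
    kron_mem_unitaryGroup hU₂ hW₁
  have hωeq : ω = X * Matrix.diagonal
      (fun ij : Fin d × Fin k => ((p ij.1 * q ij.2 : ℝ) : ℂ)) * Xᴴ := by
    rw [hω, hρeq, hσeq, cdg_kron, hXdef]
    simp only [Matrix.conjTranspose_mul, mul_assoc]
  have hBeq : (trA ω) ⊗ₖ σ = (U₂ ⊗ₖ W₁) * Matrix.diagonal
      (fun ij : Fin d × Fin k => ((p' ij.1 * q ij.2 : ℝ) : ℂ)) * (U₂ ⊗ₖ W₁)ᴴ := by
    rw [hρ'eq, hσeq, cdg_kron]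
  -- sums of eigenvalues are all 1
  have hsum_p : ∑ i, p i = 1 := by
    have := hρ.2
    rw [hρeq, trace_cdg hU₁] at this
    exact_mod_cast this
  have hsum_q : ∑ i, q i = 1 := by
    have := hσ.2
    rw [hσeq, trace_cdg hW₁] at this
    exact_mod_cast this
  have hsum_pq : ∑ ij : Fin d × Fin k, p ij.1 * q ij.2 = 1 := by
    rw [Fintype.sum_prod_type]
    simp only [← Finset.mul_sum, hsum_q, mul_one, hsum_p]
  have hsum_p' : ∑ i, p' i = 1 := by
    have h1 : (trA ω).trace = ((∑ i, p' i : ℝ) : ℂ) := by rw [hρ'eq, trace_cdg hU₂]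
    have h2 : (trA ω).trace = 1 := by
      rw [trace_trA, hωeq, trace_cdg hX, hsum_pq, Complex.ofReal_one]
    rw [h2] at h1
    exact_mod_cast h1.symm
  have hsum_p'q : ∑ ij : Fin d × Fin k, p' ij.1 * q ij.2 = 1 := by
    rw [Fintype.sum_prod_type]
    simp only [← Finset.mul_sum, hsum_q, mul_one, hsum_p']
  -- Klein's inequality for ω vs ρ'⊗σ
  have hK := klein hX hX₂ (fun ij => p ij.1 * q ij.2) (fun ij => p' ij.1 * q ij.2)
    (fun ij => mul_pos (hppos ij.1) (hqpos ij.2))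
    (fun ij => mul_pos (hp'pos ij.1) (hqpos ij.2))
    (by rw [hsum_pq, hsum_p'q])
  rw [← hωeq, ← hBeq] at hK
  -- evaluate tr(ω log ω)
  have hT1 : ((ω * matLog ω).trace).re
      = (∑ i, p i * Real.log (p i)) + ∑ j, q j * Real.log (q j) := by
    rw [hωeq, trace_self_log hX, Complex.ofReal_re]
    rw [Fintype.sum_prod_type]
    have : ∀ i : Fin d, ∀ j : Fin k, p i * q j * Real.log (p i * q j)
        = p i * Real.log (p i) * q j + p i * (q j * Real.log (q j)) := by
      intro i j
      rw [Real.log_mul (ne_of_gt (hppos i)) (ne_of_gt (hqpos j))]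
      ring
    simp only [this, Finset.sum_add_distrib, ← Finset.mul_sum, ← Finset.sum_mul,
      hsum_p, hsum_q, mul_one, one_mul]
  -- evaluate log(ρ'⊗σ)
  have hlogB : matLog ((trA ω) ⊗ₖ σ) = (matLog (trA ω)) ⊗ₖ (1 : Matrix (Fin k) (Fin k) ℂ)
      + (1 : Matrix (Fin d) (Fin d) ℂ) ⊗ₖ (matLog σ) := by
    rw [hBeq, matLog_cdg hX₂]
    have hsplit : Matrix.diagonal (fun ij : Fin d × Fin k => (Real.log (p' ij.1 * q ij.2) : ℂ))
        = Matrix.diagonal (fun ij : Fin d × Fin k => ((Real.log (p' ij.1) * 1 : ℝ) : ℂ))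
          + Matrix.diagonal (fun ij : Fin d × Fin k => ((1 * Real.log (q ij.2) : ℝ) : ℂ)) := by
      rw [Matrix.diagonal_add]
      refine congrArg Matrix.diagonal (funext fun ij => ?_)
      rw [Real.log_mul (ne_of_gt (hp'pos ij.1)) (ne_of_gt (hqpos ij.2))]
      push_cast
      ring
    rw [hsplit, mul_add, add_mul]
    congr 1
    · rw [← cdg_kron U₂ W₁ (fun i => Real.log (p' i)) (fun _ => (1 : ℝ))]
      have hone : W₁ * Matrix.diagonal (fun j : Fin k => (((1:ℝ) : ℂ))) * W₁ᴴ = 1 := by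
        have : Matrix.diagonal (fun _ : Fin k => (((1:ℝ) : ℂ))) = 1 := by
          simp [Matrix.diagonal_one]
        rw [this, mul_one]
        simpa [Matrix.star_eq_conjTranspose] using (Matrix.mem_unitaryGroup_iff.mp hW₁)
      rw [hone, hρ'eq, matLog_cdg hU₂]
    · rw [← cdg_kron U₂ W₁ (fun _ => (1 : ℝ)) (fun j => Real.log (q j))]
      have hone : U₂ * Matrix.diagonal (fun i : Fin d => (((1:ℝ) : ℂ))) * U₂ᴴ = 1 := by
        have : Matrix.diagonal (fun _ : Fin d => (((1:ℝ) : ℂ))) = 1 := by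
          simp [Matrix.diagonal_one]
        rw [this, mul_one]
        simpa [Matrix.star_eq_conjTranspose] using (Matrix.mem_unitaryGroup_iff.mp hU₂)
      rw [hone, hσeq, matLog_cdg hW₁]
  -- evaluate tr(ω log(ρ'⊗σ))
  have hT2 : ((ω * matLog ((trA ω) ⊗ₖ σ)).trace).re
      = (∑ i, p' i * Real.log (p' i)) + ((trS ω * matLog σ).trace).re := by
    rw [hlogB, mul_add, Matrix.trace_add, trace_mul_kron_one, trace_mul_one_kron,
      Complex.add_re]
    congr 1
    rw [show (trA ω * matLog (trA ω)).trace
        = ((∑ i, p' i * Real.log (p' i) : ℝ) : ℂ) from by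
      conv_lhs => rw [hρ'eq]
      rw [trace_self_log hU₂], Complex.ofReal_re]
  -- evaluate the entropies
  have hE1 : vnEntropy (trA ω) = -(∑ i, p' i * Real.log (p' i)) := by
    rw [vnEntropy, hρ'eq, trace_self_log hU₂]
    simp
  have hE2 : vnEntropy ρ = -(∑ i, p i * Real.log (p i)) := by
    rw [vnEntropy, hρeq, trace_self_log hU₁]
    simp
  have hE3 : (((σ - trS ω) * matLog σ).trace).re
      = (∑ j, q j * Real.log (q j)) - ((trS ω * matLog σ).trace).re := by
    rw [Matrix.sub_mul, Matrix.trace_sub, Complex.sub_re]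
    congr 1
    rw [show (σ * matLog σ).trace = ((∑ j, q j * Real.log (q j) : ℝ) : ℂ) from by
      conv_lhs => rw [hσeq]
      rw [trace_self_log hW₁], Complex.ofReal_re]
  rw [Complex.sub_re, hT1, hT2] at hK
  rw [hE1, hE2, hE3]
  linarith
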